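/- Let Φ be the non-selective measurement channel associated with a complete family of pairwise orthogonal projections {P_a} on ℂ^n, and let ρ be a positive definite quantum state on ℂ^n. Then Φ(ρ) is positive definite and the relative entropy between ρ and its measured state equals the entropy increase caused by the measurement: S(ρ‖Φ(ρ)) = S(Φ(ρ)) − S(ρ). -/

import Mathlib

open Matrix Kronecker
open scoped ComplexOrder

noncomputable section

variable {n : Type*} [Fintype n] [DecidableEq n]

/-- `|X| = (X† X)^{1/2}`, the positive semidefinite absolute value of a matrix. -/
def matAbs (X : Matrix n n ℂ) : Matrix n n ℂ :=
  (Matrix.posSemidef_conjTranspose_mul_self X).1.eigenvectorUnitary.1 *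
    diagonal ((↑) ∘ (Real.sqrt ∘ (Matrix.posSemidef_conjTranspose_mul_self X).1.eigenvalues)) *
    (star (Matrix.posSemidef_conjTranspose_mul_self X).1.eigenvectorUnitary : Matrix n n ℂ)

/-- `Tr |X|^p`, with the `p`-th power taken through the functional calculus. -/
def traceAbsPow (p : ℝ) (X : Matrix n n ℂ) : ℝ :=
  (Matrix.trace (cfc (fun x : ℝ => x ^ p) (matAbs X))).re

/-- The Schatten `p`-norm `‖X‖_p = (Tr |X|^p)^(1/p)`. -/
def schatten (p : ℝ) (X : Matrix n n ℂ) : ℝ :=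
  (traceAbsPow p X) ^ (1 / p)

/-- Matrix square root via the functional calculus (agrees with the positive semidefinite
square root on positive semidefinite matrices). -/
def msqrt (X : Matrix n n ℂ) : Matrix n n ℂ := cfc Real.sqrt X

/-- Matrix natural logarithm via the functional calculus. -/
def mlog (X : Matrix n n ℂ) : Matrix n n ℂ := cfc Real.log X

/-- Von Neumann entropy `S(ρ) = -Tr(ρ log ρ)`. -/
def vnEntropy (ρ : Matrix n n ℂ) : ℝ := -(Matrix.trace (ρ * mlog ρ)).re

/-- Relative entropy `S(ρ‖σ) = Tr(ρ log ρ) - Tr(ρ log σ)`. -/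
def relEnt (ρ σ : Matrix n n ℂ) : ℝ :=
  (Matrix.trace (ρ * mlog ρ)).re - (Matrix.trace (ρ * mlog σ)).re

/-- Uhlmann fidelity `F(ρ,σ) = (Tr|√σ √ρ|)²`. -/
def fidelity (ρ σ : Matrix n n ℂ) : ℝ :=
  ((Matrix.trace (matAbs (msqrt σ * msqrt ρ))).re) ^ 2

/-- Partial trace over the second factor. -/
def ptraceE {S E : Type*} [Fintype E] (Ω : Matrix (S × E) (S × E) ℂ) : Matrix S S ℂ :=
  Matrix.of fun s s' => ∑ e, Ω (s, e) (s', e)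

/-- Partial trace over the first factor. -/
def ptraceS {S E : Type*} [Fintype S] (Ω : Matrix (S × E) (S × E) ℂ) : Matrix E E ℂ :=
  Matrix.of fun e e' => ∑ s, Ω (s, e) (s, e')


lemma commute_aeval' {n : Type*} [Fintype n] [DecidableEq n]
    {A B : Matrix n n ℂ} (h : Commute A B) (p : Polynomial ℝ) :
    Commute (Polynomial.aeval A p) B := by
  induction p using Polynomial.induction_on with
  | C a => simpa [Polynomial.aeval_C, Algebra.algebraMap_eq_smul_one] using
      (Commute.one_left B).smul_left a
  | add p q hp hq => simpa [map_add] using hp.add_left hq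
  | monomial k a hk => simpa [pow_succ, _root_.map_mul, mul_assoc] using hk.mul_left h

lemma commute_cfc' {n : Type*} [Fintype n] [DecidableEq n]
    {A B : Matrix n n ℂ} (hA : A.IsHermitian) (h : Commute A B) (f : ℝ → ℝ) :
    Commute (cfc f A) B := by
  have hfin : (spectrum ℝ A).Finite := A.finite_real_spectrum
  set s := hfin.toFinset with hs
  have hcfc : cfc f A = cfc (Polynomial.eval · (Lagrange.interpolate s id f)) A := by
    apply cfc_congr
    intro x hx
    exact (Lagrange.eval_interpolate_at_node (r := f) (v := id)
      Function.injective_id.injOn (by simpa [hs] using hx)).symm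
  rw [hcfc, cfc_polynomial _ A hA.isSelfAdjoint]
  exact commute_aeval' h _

/-- For a positive definite state `ρ`, the measured state `Φ(ρ)` is positive definite and
`S(ρ‖Φ(ρ)) = S(Φ(ρ)) - S(ρ)`. -/
theorem relEnt_measurement_eq_entropy_increase
    {n ι : Type*} [Fintype n] [DecidableEq n] [Fintype ι]
    (P : ι → Matrix n n ℂ)
    (hproj : ∀ a, P a * P a = P a)
    (hherm : ∀ a, (P a)ᴴ = P a)
    (horth : ∀ a b, a ≠ b → P a * P b = 0)
    (hsum : ∑ a, P a = 1)
    (ρ : Matrix n n ℂ) (hρ : ρ.PosDef) (htr : ρ.trace = 1) :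
    (∑ a, P a * ρ * P a).PosDef ∧
      relEnt ρ (∑ a, P a * ρ * P a)
        = vnEntropy (∑ a, P a * ρ * P a) - vnEntropy ρ := by
  set σ : Matrix n n ℂ := ∑ a, P a * ρ * P a with hσ
  have hσherm : σ.IsHermitian := by
    unfold Matrix.IsHermitian
    rw [hσ, conjTranspose_sum]
    refine Finset.sum_congr rfl fun a _ => ?_
    rw [conjTranspose_mul, conjTranspose_mul, hherm, hρ.1.eq, mul_assoc]
  have hpd : σ.PosDef := by
    refine Matrix.PosDef.of_dotProduct_mulVec_pos hσherm fun x hx => ?_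
    have key : ∀ a, star x ⬝ᵥ (P a * ρ * P a) *ᵥ x
        = star ((P a) *ᵥ x) ⬝ᵥ ρ *ᵥ ((P a) *ᵥ x) := by
      intro a
      simp only [star_mulVec, Matrix.dotProduct_mulVec, Matrix.vecMul_vecMul, hherm,
        Matrix.mul_assoc]
    have hmv : ∀ (M : ι → Matrix n n ℂ) (y : n → ℂ),
        (∑ a, M a) *ᵥ y = ∑ a, M a *ᵥ y := by
      intro M y
      ext i
      simp only [Finset.sum_apply, Matrix.mulVec, dotProduct, Matrix.sum_apply,
        Finset.sum_mul]
      rw [Finset.sum_comm]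
    have hdp : ∀ (v : ι → n → ℂ), star x ⬝ᵥ (∑ a, v a) = ∑ a, star x ⬝ᵥ v a := by
      intro v
      simp only [dotProduct, Finset.sum_apply, Finset.mul_sum]
      rw [Finset.sum_comm]
    have hsum' : ∑ a, (P a) *ᵥ x = x := by
      rw [← hmv, hsum, Matrix.one_mulVec]
    have hex : ∃ a, (P a) *ᵥ x ≠ 0 := by
      by_contra h
      push_neg at h
      apply hx
      rw [← hsum']
      simp [h]
    obtain ⟨a0, ha0⟩ := hex
    have h1 : ∀ a ∈ Finset.univ, (0:ℂ) ≤ star x ⬝ᵥ (P a * ρ * P a) *ᵥ x := by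
      intro a _
      rw [key a]
      exact hρ.posSemidef.dotProduct_mulVec_nonneg _
    have h2 : (0:ℂ) < star x ⬝ᵥ (P a0 * ρ * P a0) *ᵥ x := by
      rw [key a0]; exact hρ.dotProduct_mulVec_pos ha0
    have : (0:ℂ) < ∑ a, star x ⬝ᵥ (P a * ρ * P a) *ᵥ x :=
      Finset.sum_pos' h1 ⟨a0, Finset.mem_univ a0, h2⟩
    rwa [hσ, hmv, hdp]
  refine ⟨hpd, ?_⟩
  have hcommσ : ∀ b, Commute σ (P b) := by
    intro b
    have h1 : σ * P b = P b * ρ * P b := by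
      rw [hσ, Finset.sum_mul]
      rw [Finset.sum_eq_single b]
      · rw [mul_assoc, mul_assoc, hproj, ← mul_assoc]
      · intro a _ hab
        rw [mul_assoc, mul_assoc, horth a b hab, mul_zero, mul_zero]
      · simp
    have h2 : P b * σ = P b * ρ * P b := by
      rw [hσ, Finset.mul_sum]
      rw [Finset.sum_eq_single b]
      · rw [← mul_assoc, ← mul_assoc, hproj, mul_assoc]
      · intro a _ hab
        rw [← mul_assoc, ← mul_assoc, horth b a (Ne.symm hab), zero_mul, zero_mul]
      · simp
    exact h1.trans h2.symm
  set L : Matrix n n ℂ := mlog σ with hL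
  have hLcomm : ∀ b, Commute L (P b) := fun b =>
    commute_cfc' hσherm (hcommσ b) Real.log
  have key : Matrix.trace (σ * L) = Matrix.trace (ρ * L) := by
    rw [hσ, Finset.sum_mul, Matrix.trace_sum]
    have step : ∀ a, Matrix.trace (P a * ρ * P a * L) = Matrix.trace (ρ * (P a * L)) := by
      intro a
      have hm : ρ * (P a * L) * P a = ρ * (P a * L) := by
        calc ρ * (P a * L) * P a = ρ * (P a * (L * P a)) := by rw [mul_assoc, mul_assoc]
          _ = ρ * (P a * (P a * L)) := by rw [(hLcomm a).eq]
          _ = ρ * (P a * P a * L) := by rw [← mul_assoc (P a)]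
          _ = ρ * (P a * L) := by rw [hproj]
      rw [mul_assoc, mul_assoc, Matrix.trace_mul_comm, hm]
    simp_rw [step]
    rw [← Matrix.trace_sum, ← Finset.mul_sum, ← Finset.sum_mul, hsum, one_mul]
  simp only [relEnt, vnEntropy, ← hσ, ← hL, ← key]
  ring
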